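/- Let F be the free semigroup on three generators a, b, c, and let c₀ be the smallest congruence on F containing the pair (st, stst) for all elements s, t ∈ F (i.e., all substitution instances of the identity xy = (xy)²). Then the images in the quotient F/c₀ of the six words abcb², abca, abc², abcab, abc, abcb are pairwise distinct. -/

import Mathlib

/-- All substitution instances of the identity `xy = (xy)²`. -/
def m1Rel : FreeSemigroup (Fin 3) → FreeSemigroup (Fin 3) → Prop := fun u v =>
  ∃ s t : FreeSemigroup (Fin 3), u = s * t ∧ v = s * t * (s * t)

/-- A small semigroup recording the last two letters of a word. -/
abbrev S7 : Type := Fin 3 ⊕ Fin 3 × Fin 3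

def S7last : S7 → Fin 3
  | .inl i => i
  | .inr p => p.2

instance : Semigroup S7 where
  mul x y := match y with
    | .inl m => .inr (S7last x, m)
    | .inr p => .inr p
  mul_assoc x y z := by
    cases z with
    | inr p => rfl
    | inl m => cases y with
      | inl k => rfl
      | inr p => rfl

def ψ7 : FreeSemigroup (Fin 3) →ₙ* S7 := FreeSemigroup.lift Sum.inl

/-- The kernel congruence of `ψ7`. -/
def c7 : Con (FreeSemigroup (Fin 3)) := Con.ker ψ7

lemma S7_idem (x y : S7) : x * y * (x * y) = x * y := by
  cases y with
  | inl m => rfl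
  | inr p => rfl

lemma conGen_le_c7 : conGen m1Rel ≤ c7 := by
  apply Con.conGen_le.2
  rintro u v ⟨s, t, rfl, rfl⟩
  show ψ7 (s * t) = ψ7 (s * t * (s * t))
  simp only [map_mul]
  exact (S7_idem (ψ7 s) (ψ7 t)).symm

lemma sep7 (u v : FreeSemigroup (Fin 3)) (h : ψ7 u ≠ ψ7 v) :
    (u : (conGen m1Rel).Quotient) ≠ (v : (conGen m1Rel).Quotient) := by
  intro he
  exact h (conGen_le_c7 ((Con.eq _).mp he))

theorem stmt_7 :
    let a := FreeSemigroup.of (0 : Fin 3)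
    let b := FreeSemigroup.of (1 : Fin 3)
    let c := FreeSemigroup.of (2 : Fin 3)
    ([a * b * c * b * b, a * b * c * a, a * b * c * c,
      a * b * c * a * b, a * b * c, a * b * c * b].map
        (fun w => (w : (conGen m1Rel).Quotient))).Pairwise (· ≠ ·) := by
  intro a b c
  have hp : [a * b * c * b * b, a * b * c * a, a * b * c * c,
      a * b * c * a * b, a * b * c, a * b * c * b].Pairwise
      (fun u v => ψ7 u ≠ ψ7 v) := by decide
  simp only [List.map_id', List.pure_def, List.bind_eq_flatMap, List.flatMap_cons,
    List.flatMap_nil, List.cons_append, List.nil_append, List.pairwise_cons,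
    List.mem_cons, List.not_mem_nil, or_false, forall_eq_or_imp, forall_eq,
    List.Pairwise.nil, and_true, ne_eq]
  and_intros <;> first
    | (intro x hF; exact hF.elim)
    | (apply sep7; decide)
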